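/- Let G be a finite graph with a percolation measure, A a set of vertices, and 0, b vertices in disjoint components of G∖A. If the quadruple (G,A,0,b) is good, i.e., P(0↔b) ≥ min_{a∈A} P(a↔b) − Σ_{W∩A=∅} P(C(0)=W)·min_{a∈A} P_{G∖W}(a↔b), then the pre-FKG inequality holds: P(0↔b) ≥ min_{a∈A} P(a↔b, 0↔A). -/

import Mathlib

open scoped BigOperators

structure PercGraph (V E : Type) where
  ends : E → V × V
  p : E → ℝ

namespace PercGraph

variable {V E : Type} [DecidableEq V] [Fintype E] [DecidableEq E]

/-- Weight of a configuration: each edge `e` is open (`ω e = true`) with probability `p e`. -/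
def weight (G : PercGraph V E) (ω : E → Bool) : ℝ :=
  ∏ e, if ω e then G.p e else 1 - G.p e

/-- Probability of an event under the percolation measure. -/
noncomputable def prob (G : PercGraph V E) (S : Set (E → Bool)) : ℝ :=
  ∑ ω : E → Bool, Set.indicator S G.weight ω

/-- Expectation of a function under the percolation measure. -/
noncomputable def expec (G : PercGraph V E) (f : (E → Bool) → ℝ) : ℝ :=
  ∑ ω : E → Bool, f ω * G.weight ω

/-- Two vertices are adjacent via an open edge in configuration `ω`. -/
def adj (G : PercGraph V E) (ω : E → Bool) (x y : V) : Prop :=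
  ∃ e, ω e = true ∧ (G.ends e = (x, y) ∨ G.ends e = (y, x))

/-- `x` and `y` are connected by a path of open edges. -/
def Conn (G : PercGraph V E) (ω : E → Bool) (x y : V) : Prop :=
  Relation.ReflTransGen (G.adj ω) x y

/-- The union of the open clusters of the vertices of `A`. -/
def cluster (G : PercGraph V E) (ω : E → Bool) (A : Set V) : Set V :=
  {y | ∃ a ∈ A, G.Conn ω a y}

/-- The event `x ↔ y`. -/
def connEvent (G : PercGraph V E) (x y : V) : Set (E → Bool) :=
  {ω | G.Conn ω x y}

/-- The event `x ↔ A`. -/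
def connTo (G : PercGraph V E) (x : V) (A : Set V) : Set (E → Bool) :=
  {ω | ∃ a ∈ A, G.Conn ω x a}

/-- The event `A ↮ B`. -/
def disconn (G : PercGraph V E) (A B : Set V) : Set (E → Bool) :=
  {ω | ∀ a ∈ A, ∀ b ∈ B, ¬ G.Conn ω a b}

def IncreasingEvent (S : Set (E → Bool)) : Prop :=
  ∀ ⦃ω ω' : E → Bool⦄, (∀ e, ω e = true → ω' e = true) → ω ∈ S → ω' ∈ S

def DecreasingEvent (S : Set (E → Bool)) : Prop :=
  ∀ ⦃ω ω' : E → Bool⦄, (∀ e, ω e = true → ω' e = true) → ω' ∈ S → ω ∈ S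

def IncreasingFun (f : (E → Bool) → ℝ) : Prop :=
  ∀ ⦃ω ω' : E → Bool⦄, (∀ e, ω e = true → ω' e = true) → f ω ≤ f ω'

/-- `f` is determined by the cluster of `A`. -/
def ClusterDetermined (G : PercGraph V E) (A : Set V) (f : (E → Bool) → ℝ) : Prop :=
  ∀ ω ω', G.cluster ω A = G.cluster ω' A → f ω = f ω'

/-- The event `S` is determined by the cluster of `A`. -/
def ClusterDeterminedEvent (G : PercGraph V E) (A : Set V) (S : Set (E → Bool)) : Prop :=
  ∀ ω ω', G.cluster ω A = G.cluster ω' A → (ω ∈ S ↔ ω' ∈ S)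

noncomputable def condProb (G : PercGraph V E) (S T : Set (E → Bool)) : ℝ :=
  G.prob (S ∩ T) / G.prob T

noncomputable def condExpec (G : PercGraph V E) (f : (E → Bool) → ℝ) (T : Set (E → Bool)) : ℝ :=
  G.expec (T.indicator f) / G.prob T

/-- The edge `e` is incident to the vertex `x`. -/
def incident (G : PercGraph V E) (x : V) (e : E) : Prop :=
  (G.ends e).1 = x ∨ (G.ends e).2 = x

/-- The other endpoint of an edge incident to `x`. -/
def otherEnd (G : PercGraph V E) (x : V) (e : E) : V :=
  if (G.ends e).1 = x then (G.ends e).2 else (G.ends e).1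

/-- The graph `G ∖ W`: delete the vertices of `W` and all incident edges. -/
def delete (G : PercGraph V E) (W : Finset V) :
    PercGraph V {e : E // (G.ends e).1 ∉ W ∧ (G.ends e).2 ∉ W} :=
  ⟨fun e => G.ends e.1, fun e => G.p e.1⟩

/-- The graph `G` with the probability of edge `e` replaced by `q`. -/
def withEdgeProb (G : PercGraph V E) (e : E) (q : ℝ) : PercGraph V E :=
  ⟨G.ends, Function.update G.p e q⟩

/-- Contraction of the edge `e`: set its probability to 1. -/
def contract (G : PercGraph V E) (e : E) : PercGraph V E :=
  G.withEdgeProb e 1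

/-- The event that `e` is pivotal for `U`. -/
def pivotal (e : E) (U : Set (E → Bool)) : Set (E → Bool) :=
  {ω | ¬ ((Function.update ω e true ∈ U) ↔ (Function.update ω e false ∈ U))}

/-- All edge probabilities lie in `[0,1]`. -/
def ProbValid (G : PercGraph V E) : Prop := ∀ e, 0 ≤ G.p e ∧ G.p e ≤ 1

end PercGraph

namespace PercGraph

variable {V E : Type} [Fintype V] [DecidableEq V] [Fintype E] [DecidableEq E]

/-- The quadruple `(G, A, x₀, b)` is *good*:
`P(0↔b) ≥ min_{a∈A} P(a↔b) − Σ_{W∩A=∅} P(C(0)=W)·min_{a∈A} P_{G∖W}(a↔b)`. -/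
noncomputable def Good (G : PercGraph V E) (A : Finset V) (hA : A.Nonempty)
    (x₀ b : V) : Prop :=
  A.inf' hA (fun a => G.prob (G.connEvent a b)) -
      ∑ W ∈ Finset.univ.filter (fun W : Finset V => W ∩ A = ∅),
        G.prob {ω | G.cluster ω {x₀} = ↑W} *
          A.inf' hA (fun a => (G.delete W).prob ((G.delete W).connEvent a b))
    ≤ G.prob (G.connEvent x₀ b)

end PercGraph

namespace PercGraph

variable {V E : Type} [DecidableEq V] [Fintype E] [DecidableEq E]

lemma weight_nonneg (G : PercGraph V E) (hp : G.ProbValid) (ω : E → Bool) :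
    0 ≤ G.weight ω :=
  Finset.prod_nonneg fun e _ => by
    cases h : ω e
    · simpa [h] using sub_nonneg.2 (hp e).2
    · simpa [h] using (hp e).1

lemma prob_nonneg (G : PercGraph V E) (hp : G.ProbValid) (S : Set (E → Bool)) :
    0 ≤ G.prob S :=
  Finset.sum_nonneg fun ω _ => Set.indicator_nonneg (fun ω _ => G.weight_nonneg hp ω) ω

lemma sum_weight (G : PercGraph V E) : ∑ ω : E → Bool, G.weight ω = 1 := by
  calc ∑ ω : E → Bool, G.weight ω
      = ∏ e, ∑ b : Bool, (if b then G.p e else 1 - G.p e) :=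
        (Fintype.prod_sum fun (e : E) (b : Bool) => if b then G.p e else 1 - G.p e).symm
    _ = 1 := by simp

lemma sum_split (p : E → Prop) [DecidablePred p]
    (F : (E → Bool) → ℝ) (f : ({e // p e} → Bool) → ℝ) (g : ({e // ¬ p e} → Bool) → ℝ)
    (hF : ∀ ω₁ ω₂,
      F ((Equiv.piEquivPiSubtypeProd p (fun _ => Bool)).symm (ω₁, ω₂)) = f ω₁ * g ω₂) :
    ∑ ω : E → Bool, F ω = (∑ ω₁, f ω₁) * (∑ ω₂, g ω₂) := by
  rw [← Equiv.sum_comp (Equiv.piEquivPiSubtypeProd p (fun _ => Bool)).symm F,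
    Fintype.sum_prod_type, Finset.sum_mul_sum]
  exact Finset.sum_congr rfl fun ω₁ _ => Finset.sum_congr rfl fun ω₂ _ => hF ω₁ ω₂

lemma prob_factor (G : PercGraph V E) (W : Finset V) (S : Set (E → Bool))
    (hS : ∀ ω ω' : E → Bool,
      (∀ e, ¬((G.ends e).1 ∉ W ∧ (G.ends e).2 ∉ W) → ω e = ω' e) → ω ∈ S → ω' ∈ S)
    (T : Set ({e : E // (G.ends e).1 ∉ W ∧ (G.ends e).2 ∉ W} → Bool)) :
    G.prob (S ∩ {ω | (fun e : {e : E // (G.ends e).1 ∉ W ∧ (G.ends e).2 ∉ W} => ω e.1) ∈ T})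
      = (G.delete W).prob T * G.prob S := by
  let q : E → Prop := fun e => (G.ends e).1 ∉ W ∧ (G.ends e).2 ∉ W
  let eqv := Equiv.piEquivPiSubtypeProd q (fun _ => Bool)
  have hrq : ∀ (ω₁ : {e // q e} → Bool) (ω₂ : {e // ¬ q e} → Bool) (e : {e // q e}),
      eqv.symm (ω₁, ω₂) e.1 = ω₁ e := by
    intro ω₁ ω₂ e
    simp only [eqv, Equiv.piEquivPiSubtypeProd_symm_apply]
    rw [dif_pos e.2]
  have hrq' : ∀ (ω₁ : {e // q e} → Bool) (ω₂ : {e // ¬ q e} → Bool) (e : {e // ¬ q e}),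
      eqv.symm (ω₁, ω₂) e.1 = ω₂ e := by
    intro ω₁ ω₂ e
    simp only [eqv, Equiv.piEquivPiSubtypeProd_symm_apply]
    rw [dif_neg e.2]
  let S₂ : Set ({e // ¬ q e} → Bool) := {ω₂ | eqv.symm (fun _ => true, ω₂) ∈ S}
  have hmemS : ∀ (ω₁ : {e // q e} → Bool) (ω₂ : {e // ¬ q e} → Bool),
      (eqv.symm (ω₁, ω₂) ∈ S ↔ ω₂ ∈ S₂) := by
    intro ω₁ ω₂
    constructor
    · intro hmem
      exact hS _ _ (fun e he =>
        (hrq' ω₁ ω₂ ⟨e, he⟩).trans (hrq' (fun _ => true) ω₂ ⟨e, he⟩).symm) hmem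
    · intro hmem
      exact hS _ _ (fun e he =>
        (hrq' (fun _ => true) ω₂ ⟨e, he⟩).trans (hrq' ω₁ ω₂ ⟨e, he⟩).symm) hmem
  have hTfull : ∀ (ω₁ : {e // q e} → Bool) (ω₂ : {e // ¬ q e} → Bool),
      ((eqv.symm (ω₁, ω₂)) ∈ {ω : E → Bool | (fun e : {e // q e} => ω e.1) ∈ T} ↔ ω₁ ∈ T) := by
    intro ω₁ ω₂
    have hres : (fun e : {e // q e} => eqv.symm (ω₁, ω₂) e.1) = ω₁ := funext (hrq ω₁ ω₂)
    simp only [Set.mem_setOf_eq, hres]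
  have hweight : ∀ (ω₁ : {e // q e} → Bool) (ω₂ : {e // ¬ q e} → Bool),
      G.weight (eqv.symm (ω₁, ω₂))
        = (G.delete W).weight ω₁ *
            ∏ e : {e // ¬ q e}, (if ω₂ e then G.p e.1 else 1 - G.p e.1) := by
    intro ω₁ ω₂
    have hfac := Fintype.prod_subtype_mul_prod_subtype q
      (fun e => if eqv.symm (ω₁, ω₂) e then G.p e else 1 - G.p e)
    rw [weight, ← hfac]
    congr 1
    · exact Finset.prod_congr rfl fun e _ => by rw [hrq ω₁ ω₂ e]; rfl
    · exact Finset.prod_congr rfl fun e _ => by rw [hrq' ω₁ ω₂ e]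
  have e1 : G.prob (S ∩ {ω : E → Bool | (fun e : {e // q e} => ω e.1) ∈ T})
      = (∑ ω₁, Set.indicator T (G.delete W).weight ω₁) * (∑ ω₂, Set.indicator S₂ (fun ω₂ => ∏ e : {e // ¬ q e}, if ω₂ e then G.p e.1 else 1 - G.p e.1) ω₂) := by
    refine sum_split q _ _ _ ?_
    intro ω₁ ω₂
    by_cases h₁ : ω₁ ∈ T <;> by_cases h₂ : ω₂ ∈ S₂
    · rw [Set.indicator_of_mem (Set.mem_inter ((hmemS ω₁ ω₂).2 h₂) ((hTfull ω₁ ω₂).2 h₁)),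
        Set.indicator_of_mem h₁, Set.indicator_of_mem h₂, hweight]
    · rw [Set.indicator_of_notMem (fun hc => h₂ ((hmemS ω₁ ω₂).1 hc.1)),
        Set.indicator_of_notMem h₂, mul_zero]
    · rw [Set.indicator_of_notMem (fun hc => h₁ ((hTfull ω₁ ω₂).1 hc.2)),
        Set.indicator_of_notMem h₁, zero_mul]
    · rw [Set.indicator_of_notMem (fun hc => h₁ ((hTfull ω₁ ω₂).1 hc.2)),
        Set.indicator_of_notMem h₁, zero_mul]
  have e2 : G.prob S = (∑ ω₁, (G.delete W).weight ω₁) * (∑ ω₂, Set.indicator S₂ (fun ω₂ => ∏ e : {e // ¬ q e}, if ω₂ e then G.p e.1 else 1 - G.p e.1) ω₂) := by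
    refine sum_split q _ _ _ ?_
    intro ω₁ ω₂
    by_cases h₂ : ω₂ ∈ S₂
    · rw [Set.indicator_of_mem ((hmemS ω₁ ω₂).2 h₂), Set.indicator_of_mem h₂, hweight]
    · rw [Set.indicator_of_notMem (fun hc => h₂ ((hmemS ω₁ ω₂).1 hc)),
        Set.indicator_of_notMem h₂, mul_zero]
  refine e1.trans ?_
  rw [e2, sum_weight (G.delete W), one_mul]
  rfl

lemma conn_of_delete (G : PercGraph V E) (W : Finset V) (ω : E → Bool) (a b : V)
    (h : (G.delete W).Conn (fun e => ω e.1) a b) : G.Conn ω a b := by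
  induction h with
  | refl => exact Relation.ReflTransGen.refl
  | tail _ hadj ih =>
    obtain ⟨e, he, hends⟩ := hadj
    exact ih.tail ⟨e.1, he, hends⟩

lemma cluster_det (G : PercGraph V E) (W : Finset V) (x₀ : V) (ω ω' : E → Bool)
    (hagree : ∀ e, ¬((G.ends e).1 ∉ W ∧ (G.ends e).2 ∉ W) → ω e = ω' e)
    (h : G.cluster ω {x₀} = ↑W) : G.cluster ω' {x₀} = ↑W := by
  have hmem : ∀ y, G.Conn ω x₀ y → y ∈ W := by
    intro y hy
    have hy' : y ∈ G.cluster ω {x₀} := ⟨x₀, rfl, hy⟩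
    rw [h] at hy'
    exact hy'
  have hx₀ : x₀ ∈ W := hmem x₀ Relation.ReflTransGen.refl
  have hopen : ∀ e, (G.ends e).1 ∈ W ∨ (G.ends e).2 ∈ W → ω e = ω' e := by
    intro e he
    exact hagree e (by tauto)
  have fwd : ∀ y, G.Conn ω x₀ y → G.Conn ω' x₀ y := by
    intro y hy
    induction hy with
    | refl => exact Relation.ReflTransGen.refl
    | @tail y' z hconn hadj ih =>
      obtain ⟨e, he, hends⟩ := hadj
      have hy'W : y' ∈ W := hmem y' hconn
      have hcond : (G.ends e).1 ∈ W ∨ (G.ends e).2 ∈ W := by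
        rcases hends with h1 | h1
        · left; rw [h1]; exact hy'W
        · right; rw [h1]; exact hy'W
      exact ih.tail ⟨e, by rw [← hopen e hcond]; exact he, hends⟩
  have bwd : ∀ y, G.Conn ω' x₀ y → y ∈ W ∧ G.Conn ω x₀ y := by
    intro y hy
    induction hy with
    | refl => exact ⟨hx₀, Relation.ReflTransGen.refl⟩
    | @tail y' z hconn hadj ih =>
      obtain ⟨hy'W, hy'c⟩ := ih
      obtain ⟨e, he, hends⟩ := hadj
      have hcond : (G.ends e).1 ∈ W ∨ (G.ends e).2 ∈ W := by
        rcases hends with h1 | h1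
        · left; rw [h1]; exact hy'W
        · right; rw [h1]; exact hy'W
      have heo : ω e = true := by rw [hopen e hcond]; exact he
      have hz : G.Conn ω x₀ z := hy'c.tail ⟨e, heo, hends⟩
      exact ⟨hmem z hz, hz⟩
  ext y
  constructor
  · rintro ⟨a, ha, hconn⟩
    rw [Set.mem_singleton_iff] at ha
    exact Finset.mem_coe.mpr (bwd y (ha ▸ hconn)).1
  · intro hyW
    have hy : y ∈ G.cluster ω {x₀} := by rw [h]; exact hyW
    obtain ⟨a, ha, hconn⟩ := hy
    rw [Set.mem_singleton_iff] at ha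
    exact ⟨x₀, rfl, fwd y (ha ▸ hconn)⟩

lemma sum_prob_le {ι : Type} (G : PercGraph V E) (hp : G.ProbValid)
    (F : Finset ι) (S : ι → Set (E → Bool)) (U : Set (E → Bool))
    (hdisj : ∀ i ∈ F, ∀ j ∈ F, i ≠ j → ∀ ω, ω ∈ S i → ω ∉ S j)
    (hsub : ∀ i ∈ F, S i ⊆ U) :
    ∑ i ∈ F, G.prob (S i) ≤ G.prob U := by
  unfold prob
  rw [Finset.sum_comm]
  apply Finset.sum_le_sum
  intro ω _
  by_cases hmem : ∃ i ∈ F, ω ∈ S i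
  · obtain ⟨i, hiF, hi⟩ := hmem
    rw [Finset.sum_eq_single_of_mem i hiF
      (fun j hj hne => Set.indicator_of_notMem (hdisj i hiF j hj (Ne.symm hne) ω hi) _),
      Set.indicator_of_mem hi, Set.indicator_of_mem (hsub i hiF hi)]
  · rw [Finset.sum_eq_zero
      (fun j hj => Set.indicator_of_notMem (fun hωj => hmem ⟨j, hj, hωj⟩) _)]
    exact Set.indicator_nonneg (fun ω _ => G.weight_nonneg hp ω) ω

lemma prob_inter_add_compl (G : PercGraph V E) (S T : Set (E → Bool)) :
    G.prob (S ∩ T) + G.prob (S ∩ Tᶜ) = G.prob S := by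
  classical
  unfold prob
  rw [← Finset.sum_add_distrib]
  refine Finset.sum_congr rfl fun ω _ => ?_
  by_cases hS : ω ∈ S <;> by_cases hT : ω ∈ T <;>
    simp [Set.indicator_apply, hS, hT]

end PercGraph

/-- a good quadruple satisfies the pre-FKG inequality
`P(0↔b) ≥ min_{a∈A} P(a↔b, 0↔A)`. -/
theorem preFKG_of_good
    {V E : Type} [Fintype V] [DecidableEq V] [Fintype E] [DecidableEq E]
    (G : PercGraph V E) (hp : G.ProbValid) (A : Finset V) (hA : A.Nonempty)
    (x₀ b : V)
    (hdisj : ¬ (G.delete A).Conn (fun _ => true) x₀ b)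
    (hgood : G.Good A hA x₀ b) :
    A.inf' hA (fun a => G.prob (G.connEvent a b ∩ G.connTo x₀ ↑A))
      ≤ G.prob (G.connEvent x₀ b) := by
  classical
  obtain ⟨a, haA, ha⟩ := Finset.exists_mem_eq_inf' hA (fun a => G.prob (G.connEvent a b))
  have h1 : G.prob (G.connEvent a b ∩ G.connTo x₀ ↑A)
      ≤ A.inf' hA (fun a => G.prob (G.connEvent a b)) -
        ∑ W ∈ Finset.univ.filter (fun W : Finset V => W ∩ A = ∅),
          G.prob {ω | G.cluster ω {x₀} = ↑W} *
            A.inf' hA (fun a => (G.delete W).prob ((G.delete W).connEvent a b)) := by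
    rw [ha, le_sub_iff_add_le]
    have hterm : ∀ W ∈ Finset.univ.filter (fun W : Finset V => W ∩ A = ∅),
        G.prob {ω | G.cluster ω {x₀} = ↑W} *
            A.inf' hA (fun a => (G.delete W).prob ((G.delete W).connEvent a b))
          ≤ G.prob ({ω | G.cluster ω {x₀} = ↑W} ∩
              {ω | (fun e : {e : E // (G.ends e).1 ∉ W ∧ (G.ends e).2 ∉ W} => ω e.1)
                ∈ (G.delete W).connEvent a b}) := by
      intro W _
      rw [G.prob_factor W {ω | G.cluster ω {x₀} = ↑W}
        (fun ω ω' hag h => G.cluster_det W x₀ ω ω' hag h)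
        ((G.delete W).connEvent a b), mul_comm]
      exact mul_le_mul_of_nonneg_right (Finset.inf'_le _ haA) (G.prob_nonneg hp _)
    have hsum : ∑ W ∈ Finset.univ.filter (fun W : Finset V => W ∩ A = ∅),
        G.prob ({ω | G.cluster ω {x₀} = ↑W} ∩
            {ω | (fun e : {e : E // (G.ends e).1 ∉ W ∧ (G.ends e).2 ∉ W} => ω e.1)
              ∈ (G.delete W).connEvent a b})
          ≤ G.prob (G.connEvent a b ∩ (G.connTo x₀ ↑A)ᶜ) := by
      apply G.sum_prob_le hp
      · intro W₁ hW₁ W₂ hW₂ hne ω hω₁ hω₂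
        exact hne (Finset.coe_injective (hω₁.1.symm.trans hω₂.1))
      · intro W hW ω hω
        refine ⟨G.conn_of_delete W ω a b hω.2, ?_⟩
        rintro ⟨a', ha'A, hconn⟩
        have ha'W : a' ∈ G.cluster ω {x₀} := ⟨x₀, rfl, hconn⟩
        rw [hω.1] at ha'W
        have : a' ∈ W ∩ A := Finset.mem_inter.2 ⟨ha'W, ha'A⟩
        rw [Finset.mem_filter] at hW
        rw [hW.2] at this
        exact absurd this (Finset.notMem_empty a')
    calc G.prob (G.connEvent a b ∩ G.connTo x₀ ↑A) +
          ∑ W ∈ Finset.univ.filter (fun W : Finset V => W ∩ A = ∅),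
            G.prob {ω | G.cluster ω {x₀} = ↑W} *
              A.inf' hA (fun a => (G.delete W).prob ((G.delete W).connEvent a b))
        ≤ G.prob (G.connEvent a b ∩ G.connTo x₀ ↑A) +
            G.prob (G.connEvent a b ∩ (G.connTo x₀ ↑A)ᶜ) := by
          exact add_le_add (le_refl _) (le_trans (Finset.sum_le_sum hterm) hsum)
      _ = G.prob (G.connEvent a b) := G.prob_inter_add_compl _ _
  exact le_trans (le_trans (Finset.inf'_le _ haA) h1) hgood
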